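/- For $n = 3$ and $\eta = \tan(\pi/4 + \epsilon)$ with $\epsilon \in (0, \pi/8)$, the integral $\int_0^{\pi/4-\epsilon} \frac{\cos\alpha - \eta\sin\alpha}{(\pi/4 - \alpha)^{2}}\,d\alpha$ tends to $+\infty$ as $\epsilon \to 0^+$; more precisely it is bounded below by $-\frac{1}{\pi/4-\epsilon}\log\frac{\epsilon}{\pi/4} + O(1)$. -/

import Mathlib

open scoped Real Topology
open Filter intervalIntegral

/-- Chord bound for sine: for `0 ≤ x ≤ b ≤ π`, `(x/b) * sin b ≤ sin x`. -/
lemma aux_sin_chord {x b : ℝ} (hb : 0 < b) (hbπ : b ≤ π) (hx0 : 0 ≤ x) (hxb : x ≤ b) :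
    x / b * Real.sin b ≤ Real.sin x := by
  have ha' : (0:ℝ) ≤ 1 - x / b := by
    rw [sub_nonneg]; exact div_le_one_of_le₀ hxb hb.le
  have hb' : (0:ℝ) ≤ x / b := div_nonneg hx0 hb.le
  have hab : (1 - x / b) + x / b = 1 := by ring
  have h := strictConcaveOn_sin_Icc.concaveOn.2
    (Set.mem_Icc.2 ⟨le_refl (0:ℝ), Real.pi_pos.le⟩)
    (Set.mem_Icc.2 ⟨hb.le, hbπ⟩) ha' hb' hab
  simpa [smul_eq_mul, div_mul_cancel₀, hb.ne'] using h

/-- Key lower bound for the integral. -/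
lemma aux_key {ε : ℝ} (hε : ε ∈ Set.Ioo (0 : ℝ) (π / 8)) :
    (∫ α in (0 : ℝ)..(π / 4 - ε),
        (Real.cos α - Real.tan (π / 4 + ε) * Real.sin α) / (π / 4 - α) ^ 2)
      ≥ -(1 / (π / 4 - ε)) * Real.log (ε / (π / 4)) - 8 / π := by
  obtain ⟨hε0, hε8⟩ := hε
  have hπ := Real.pi_pos
  set b : ℝ := π / 4 - ε with hbdef
  clear_value b
  have hb0 : 0 < b := by rw [hbdef]; linarith
  have hb8 : π / 8 ≤ b := by rw [hbdef]; linarith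
  have hbπ : b < π / 4 := by rw [hbdef]; linarith
  have hθ : π / 4 + ε < π / 2 := by linarith
  have hcosθ : 0 < Real.cos (π / 4 + ε) :=
    Real.cos_pos_of_mem_Ioo ⟨by linarith, hθ⟩
  have hsinb : 0 < Real.sin b := Real.sin_pos_of_pos_of_lt_pi hb0 (by linarith)
  have hcs : Real.cos (π / 4 + ε) = Real.sin b := by
    rw [← Real.sin_pi_div_two_sub, hbdef]; ring_nf
  -- pointwise lower bound
  have hpt : ∀ α ∈ Set.Icc (0:ℝ) b,
      (b - α) / b / (π / 4 - α) ^ 2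
        ≤ (Real.cos α - Real.tan (π / 4 + ε) * Real.sin α) / (π / 4 - α) ^ 2 := by
    intro α hα
    obtain ⟨hα0, hαb⟩ := hα
    have hu : (0:ℝ) < π / 4 - α := by rw [hbdef] at hαb; linarith
    have hle : (b - α) / b ≤ Real.cos α - Real.tan (π / 4 + ε) * Real.sin α := by
      have h1 : Real.sin (b - α)
          = Real.cos α * Real.cos (π/4+ε) - Real.sin α * Real.sin (π/4+ε) := by
        have hba : b - α = π / 2 - (α + (π / 4 + ε)) := by rw [hbdef]; ring
        rw [hba, Real.sin_pi_div_two_sub, Real.cos_add]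
      have hnum : Real.cos α - Real.tan (π / 4 + ε) * Real.sin α
          = Real.sin (b - α) / Real.sin b := by
        rw [Real.tan_eq_sin_div_cos, h1, ← hcs, eq_div_iff hcosθ.ne', sub_mul,
          div_mul_eq_mul_div, div_mul_cancel₀ _ hcosθ.ne']
        ring
      rw [hnum, div_le_div_iff₀ hb0 hsinb]
      have hch := aux_sin_chord hb0 (by linarith) (sub_nonneg.2 hαb)
        (by linarith : b - α ≤ b)
      have hch' : (b - α) * Real.sin b ≤ Real.sin (b - α) * b := by
        calc (b - α) * Real.sin b = (b - α) / b * Real.sin b * b := by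
              field_simp
          _ ≤ _ := mul_le_mul_of_nonneg_right hch hb0.le
      exact hch'
    gcongr
  -- integrability
  have hcont1 : ContinuousOn
      (fun α => (Real.cos α - Real.tan (π / 4 + ε) * Real.sin α) / (π / 4 - α) ^ 2)
      (Set.Icc 0 b) := by
    apply ContinuousOn.div
    · exact (Real.continuous_cos.sub (continuous_const.mul Real.continuous_sin)).continuousOn
    · exact ((continuous_const.sub continuous_id).pow 2).continuousOn
    · intro α hα
      have : (0:ℝ) < π / 4 - α := by
        obtain ⟨_, hαb⟩ := hα; rw [hbdef] at hαb; linarith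
      positivity
  have hcont2 : ContinuousOn
      (fun α => (b - α) / b / (π / 4 - α) ^ 2) (Set.Icc 0 b) := by
    apply ContinuousOn.div
    · exact ((continuous_const.sub continuous_id).div_const b).continuousOn
    · exact ((continuous_const.sub continuous_id).pow 2).continuousOn
    · intro α hα
      have : (0:ℝ) < π / 4 - α := by
        obtain ⟨_, hαb⟩ := hα; rw [hbdef] at hαb; linarith
      positivity
  have huIcc : Set.uIcc (0:ℝ) b = Set.Icc 0 b := Set.uIcc_of_le hb0.le
  have hint1 : IntervalIntegrable
      (fun α => (Real.cos α - Real.tan (π / 4 + ε) * Real.sin α) / (π / 4 - α) ^ 2)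
      MeasureTheory.volume 0 b :=
    (hcont1.mono (by rw [huIcc])).intervalIntegrable
  have hint2 : IntervalIntegrable
      (fun α => (b - α) / b / (π / 4 - α) ^ 2) MeasureTheory.volume 0 b :=
    (hcont2.mono (by rw [huIcc])).intervalIntegrable
  -- evaluate the lower integral via an antiderivative
  have hFTC : (∫ α in (0:ℝ)..b, (b - α) / b / (π / 4 - α) ^ 2)
      = (1/b) * (-Real.log ε - 1) - (1/b) * (-Real.log (π/4) - ε/(π/4)) := by
    have hbε : π / 4 - b = ε := by rw [hbdef]; ring
    have := intervalIntegral.integral_eq_sub_of_hasDerivAt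
      (f := fun α => (1/b) * (-Real.log (π/4 - α) - ε/(π/4 - α)))
      (f' := fun α => (b - α) / b / (π / 4 - α) ^ 2)
      (a := 0) (b := b) ?_ hint2
    · rw [this]
      simp only [hbε, sub_zero]
      rw [div_self hε0.ne']
    · intro α hα
      rw [huIcc] at hα
      obtain ⟨hα0, hαb⟩ := hα
      have hu : (0:ℝ) < π / 4 - α := by rw [hbdef] at hαb; linarith
      have h1 : HasDerivAt (fun α : ℝ => π / 4 - α) (-1) α := by
        simpa using (hasDerivAt_id α).const_sub (π/4)
      have h2 : HasDerivAt (fun α : ℝ => Real.log (π / 4 - α)) (-1 / (π/4 - α)) α :=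
        h1.log hu.ne'
      have h3 : HasDerivAt (fun α : ℝ => ε / (π / 4 - α))
          ((0 * (π/4 - α) - ε * (-1)) / (π/4 - α)^2) α :=
        (hasDerivAt_const α ε).div h1 hu.ne'
      have h4 := (h2.neg.sub h3).const_mul (1/b)
      convert h4 using 1
      show (b - α) / b / (π / 4 - α) ^ 2 = _
      have hbα : b - α = (π/4 - α) - ε := by rw [hbdef]; ring
      rw [hbα]
      have hu' : (π/4 - α) ≠ 0 := hu.ne'
      set u := π / 4 - α with hudef
      clear_value u
      field_simp
      ring
      all_goals rfl
  -- compare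
  have hmono := intervalIntegral.integral_mono_on hb0.le hint2 hint1 hpt
  rw [hFTC] at hmono
  have hlog : Real.log (ε / (π/4)) = Real.log ε - Real.log (π/4) :=
    Real.log_div hε0.ne' (by positivity)
  have hb' : 1 / b ≤ 8 / π := by
    rw [div_le_div_iff₀ hb0 hπ]; linarith
  have hb'' : 0 < 1 / b := by positivity
  have hεπ : (1/b) * (ε / (π/4)) ≥ 0 := by positivity
  calc -(1 / b) * Real.log (ε / (π / 4)) - 8 / π
      ≤ (1/b) * (-Real.log ε - 1) - (1/b) * (-Real.log (π/4) - ε/(π/4)) := by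
        rw [hlog]; nlinarith [hεπ, hb', hb'']
    _ ≤ _ := hmono

/-- For `n = 3` and `η = tan(π/4+ε)` with `ε ∈ (0, π/8)`, the integral
`∫₀^{π/4-ε} (cos α - η sin α)/(π/4-α)² dα` tends to `+∞` as `ε → 0⁺`, and is
bounded below by `-(1/(π/4-ε)) log(ε/(π/4)) + O(1)`. -/
theorem stmt17 :
    Tendsto (fun ε : ℝ =>
        ∫ α in (0 : ℝ)..(π / 4 - ε),
          (Real.cos α - Real.tan (π / 4 + ε) * Real.sin α) / (π / 4 - α) ^ 2)
      (𝓝[Set.Ioo 0 (π / 8)] 0) atTop ∧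
    ∃ C : ℝ, ∀ ε ∈ Set.Ioo (0 : ℝ) (π / 8),
      (∫ α in (0 : ℝ)..(π / 4 - ε),
          (Real.cos α - Real.tan (π / 4 + ε) * Real.sin α) / (π / 4 - α) ^ 2)
        ≥ -(1 / (π / 4 - ε)) * Real.log (ε / (π / 4)) - C := by
  have hπ := Real.pi_pos
  constructor
  · have hlb : ∀ᶠ ε in 𝓝[Set.Ioo 0 (π / 8)] (0:ℝ),
        -(1 / (π / 4 - ε)) * Real.log (ε / (π / 4)) - 8 / π
          ≤ ∫ α in (0 : ℝ)..(π / 4 - ε),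
              (Real.cos α - Real.tan (π / 4 + ε) * Real.sin α) / (π / 4 - α) ^ 2 := by
      filter_upwards [self_mem_nhdsWithin] with ε hε
      exact aux_key hε
    apply tendsto_atTop_mono' _ hlb
    have hc : Tendsto (fun ε : ℝ => π / 4 - ε) (𝓝 0) (𝓝 (π / 4)) := by
      simpa using (tendsto_id : Tendsto id (𝓝 (0:ℝ)) _).const_sub (π/4)
    have h1 : Tendsto (fun ε : ℝ => 1 / (π / 4 - ε)) (𝓝[Set.Ioo 0 (π / 8)] 0)
        (𝓝 (1 / (π / 4))) :=
      (tendsto_const_nhds.div hc (by positivity)).mono_left nhdsWithin_le_nhds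
    have h2 : Tendsto (fun ε : ℝ => ε / (π/4)) (𝓝[Set.Ioo 0 (π / 8)] 0) (𝓝[>] 0) := by
      apply tendsto_nhdsWithin_of_tendsto_nhds_of_eventually_within
      · have := ((tendsto_id : Tendsto id (𝓝 (0:ℝ)) _).div_const (π/4)).mono_left
          (nhdsWithin_le_nhds (s := Set.Ioo 0 (π / 8)))
        simpa using this
      · filter_upwards [self_mem_nhdsWithin] with ε hε
        have hε0 := hε.1
        exact Set.mem_Ioi.2 (by positivity)
    have h3 : Tendsto (fun ε : ℝ => -Real.log (ε / (π/4)))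
        (𝓝[Set.Ioo 0 (π / 8)] 0) atTop := by
      have := Real.tendsto_log_nhdsGT_zero.comp h2
      exact tendsto_neg_atBot_atTop.comp this
    have hmul : Tendsto (fun ε : ℝ => (1 / (π / 4 - ε)) * (-Real.log (ε / (π/4))))
        (𝓝[Set.Ioo 0 (π / 8)] 0) atTop :=
      Filter.Tendsto.pos_mul_atTop (by positivity) h1 h3
    have hadd := tendsto_atTop_add_const_right _ (-(8/π)) hmul
    apply hadd.congr
    intro ε
    ring
  · exact ⟨8 / π, fun ε hε => aux_key hε⟩
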